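/- Let L = I + A be an invertible symmetric real n×n matrix with A having zero diagonal. If tr(L - L^{-1}) ≥ 0 and A ≠ 0, then g = L^{-1} is not positive definite. -/

import Mathlib

/-- If `L = I + A` is invertible and symmetric with `A` nonzero and zero
diagonal, and `tr(L - L⁻¹) ≥ 0`, then `g = L⁻¹` is not positive definite. -/
theorem stmt5 (n : ℕ) (A : Matrix (Fin n) (Fin n) ℝ) (hsymm : A.IsSymm)
    (hdiag : ∀ i, A i i = 0) (hA : A ≠ 0)
    (hinv : IsUnit ((1 : Matrix (Fin n) (Fin n) ℝ) + A).det)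
    (htr : 0 ≤ Matrix.trace (((1 : Matrix (Fin n) (Fin n) ℝ) + A) -
      ((1 : Matrix (Fin n) (Fin n) ℝ) + A)⁻¹)) :
    ¬ (((1 : Matrix (Fin n) (Fin n) ℝ) + A)⁻¹).PosDef := by
  intro hpd
  set L : Matrix (Fin n) (Fin n) ℝ := 1 + A with hL
  have hgL : L⁻¹ * L = 1 := Matrix.nonsing_inv_mul L hinv
  have hLg : L * L⁻¹ = 1 := Matrix.mul_nonsing_inv L hinv
  have hgA : L⁻¹ * A = 1 - L⁻¹ := by
    have h : L⁻¹ + L⁻¹ * A = 1 := by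
      have h2 : L⁻¹ * (1 + A) = 1 := by rw [← hL]; exact hgL
      rwa [mul_add, mul_one] at h2
    exact eq_sub_of_add_eq' h
  have hAg : A * L⁻¹ = 1 - L⁻¹ := by
    have h : L⁻¹ + A * L⁻¹ = 1 := by
      have h2 : (1 + A) * L⁻¹ = 1 := by rw [← hL]; exact hLg
      rwa [add_mul, one_mul] at h2
    exact eq_sub_of_add_eq' h
  have hkey : A * L⁻¹ * A = A - 1 + L⁻¹ := by
    rw [mul_assoc, hgA, mul_sub, mul_one, hAg]
    abel
  have htrA : A.trace = 0 := by simp [Matrix.trace, Matrix.diag, hdiag]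
  have htr2 : Matrix.trace (L - L⁻¹) = -(Matrix.trace (A * L⁻¹ * A)) := by
    rw [hkey, hL]
    simp only [Matrix.trace_sub, Matrix.trace_add, htrA]
    ring
  have hdiagentry : ∀ k, (A * L⁻¹ * A) k k = dotProduct (A k) (L⁻¹.mulVec (A k)) := by
    intro k
    simp only [Matrix.mul_apply, dotProduct, Matrix.mulVec, Finset.sum_mul,
      Finset.mul_sum]
    rw [Finset.sum_comm]
    refine Finset.sum_congr rfl fun l _ => Finset.sum_congr rfl fun j _ => ?_
    have hs : A j k = A k j := by
      have := congrFun (congrFun hsymm k) j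
      simpa [Matrix.transpose_apply] using this
    rw [hs]; ring
  have hpos : 0 < Matrix.trace (A * L⁻¹ * A) := by
    obtain ⟨i, j, hij⟩ : ∃ i j, A i j ≠ 0 := by
      by_contra h
      push_neg at h
      exact hA (Matrix.ext h)
    rw [Matrix.trace]
    apply Finset.sum_pos'
    · intro k _
      have h0 := hpd.posSemidef.dotProduct_mulVec_nonneg (A k)
      rw [Matrix.diag_apply, hdiagentry k]
      simpa using h0
    · refine ⟨i, Finset.mem_univ i, ?_⟩
      have hrow : A i ≠ 0 := fun h => hij (congrFun h j)
      have h0 := hpd.dotProduct_mulVec_pos hrow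
      rw [Matrix.diag_apply, hdiagentry i]
      simpa using h0
  rw [htr2] at htr
  linarith
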